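/- Let X1 and X2 be independent with X_i having the inverse-Gamma density f(x_i; α_i, β) = β^{α_i}/Γ(α_i) · x_i^{−α_i−1} e^{−β/x_i}, x_i > 0, sharing the scale β > 0. Reparameterize β = (α1 + α2)/λ with λ > 0, and let ℓ̄(α1, α2, λ; x1, x2) = log f(x1; α1, (α1+α2)/λ) + log f(x2; α2, (α1+α2)/λ) be the joint log-likelihood in (α1, α2, λ). Then for all α1, α2, λ > 0 and i = 1, 2: ∫_0^∞ ∫_0^∞ (∂ℓ̄/∂α_i)(∂ℓ̄/∂λ) e^{ℓ̄} dx1 dx2 = 0; that is, the reparameterization λ = (α1 + α2)/β makes the shape parameters α1 and α2 globally orthogonal to λ. -/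

import Mathlib

open MeasureTheory

/-- The inverse-Gamma density with shape `α` and scale `β`:
`f(x; α, β) = β^α/Γ(α) · x^{−α−1} e^{−β/x}`, `x > 0`. -/
noncomputable def invGammaPdf (α β x : ℝ) : ℝ :=
  β ^ α / Real.Gamma α * x ^ (-α - 1) * Real.exp (-β / x)

/-- The joint log-likelihood of two independent inverse-Gamma observations sharing the
scale, in the reparameterization `β = (α₁+α₂)/λ`. -/
noncomputable def invGammaLbar (α₁ α₂ lam x₁ x₂ : ℝ) : ℝ :=
  Real.log (invGammaPdf α₁ ((α₁ + α₂) / lam) x₁) +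
    Real.log (invGammaPdf α₂ ((α₁ + α₂) / lam) x₂)


open Set Real Filter Complex

set_option maxHeartbeats 4000000


-- substitution x = b / t
lemma inv_image (b : ℝ) (hb : 0 < b) : (fun t : ℝ => b / t) '' Set.Ioi 0 = Set.Ioi 0 := by
  ext y
  constructor
  · rintro ⟨t, ht, rfl⟩
    exact div_pos hb ht
  · intro hy
    exact ⟨b / y, div_pos hb hy, by field_simp⟩

lemma subst_integral (b : ℝ) (hb : 0 < b) (g : ℝ → ℝ) :
    ∫ x in Set.Ioi (0:ℝ), g x = ∫ t in Set.Ioi (0:ℝ), (b / t ^ 2) * g (b / t) := by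
  have hd : ∀ t ∈ Set.Ioi (0:ℝ), HasDerivWithinAt (fun t : ℝ => b / t) (-b / t ^ 2) (Set.Ioi 0) t := by
    intro t ht
    have : HasDerivAt (fun t : ℝ => b / t) (-b / t ^ 2) t := by
      simpa [div_eq_mul_inv, mul_comm, neg_div] using
        ((hasDerivAt_inv (ne_of_gt ht)).const_mul b)
    exact this.hasDerivWithinAt
  have hinj : Set.InjOn (fun t : ℝ => b / t) (Set.Ioi 0) := by
    intro s hs t ht h
    have hs' : (0:ℝ) < s := hs
    have ht' : (0:ℝ) < t := ht
    field_simp at h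
    linarith
  have := MeasureTheory.integral_image_eq_integral_abs_deriv_smul measurableSet_Ioi hd hinj g
  rw [inv_image b hb] at this
  rw [this]
  refine MeasureTheory.setIntegral_congr_fun measurableSet_Ioi fun t ht => ?_
  have ht' : (0:ℝ) < t := ht
  rw [abs_div, abs_neg, abs_of_pos hb, abs_of_pos (by positivity : (0:ℝ) < t ^ 2)]
  simp [smul_eq_mul]

lemma subst_integrableOn (b : ℝ) (hb : 0 < b) (g : ℝ → ℝ) :
    IntegrableOn g (Set.Ioi (0:ℝ)) ↔
      IntegrableOn (fun t => (b / t ^ 2) * g (b / t)) (Set.Ioi (0:ℝ)) := by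
  have hd : ∀ t ∈ Set.Ioi (0:ℝ), HasDerivWithinAt (fun t : ℝ => b / t) (-b / t ^ 2) (Set.Ioi 0) t := by
    intro t ht
    have : HasDerivAt (fun t : ℝ => b / t) (-b / t ^ 2) t := by
      simpa [div_eq_mul_inv, mul_comm, neg_div] using
        ((hasDerivAt_inv (ne_of_gt ht)).const_mul b)
    exact this.hasDerivWithinAt
  have hinj : Set.InjOn (fun t : ℝ => b / t) (Set.Ioi 0) := by
    intro s hs t ht h
    have hs' : (0:ℝ) < s := hs
    have ht' : (0:ℝ) < t := ht
    field_simp at h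
    linarith
  have := MeasureTheory.integrableOn_image_iff_integrableOn_abs_deriv_smul measurableSet_Ioi hd hinj g
  rw [inv_image b hb] at this
  rw [this]
  constructor <;> intro h <;> refine h.congr_fun (fun t ht => ?_) measurableSet_Ioi
  · have ht' : (0:ℝ) < t := ht
    beta_reduce
    rw [smul_eq_mul, abs_div, abs_neg, abs_of_pos hb, abs_of_pos (by positivity : (0:ℝ) < t ^ 2)]
  · have ht' : (0:ℝ) < t := ht
    beta_reduce
    rw [smul_eq_mul, abs_div, abs_neg, abs_of_pos hb, abs_of_pos (by positivity : (0:ℝ) < t ^ 2)]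

noncomputable def Glog (s : ℝ) : ℝ :=
  ∫ t in Set.Ioi (0:ℝ), Real.log t * t ^ (s - 1) * Real.exp (-t)

lemma mellin_pack {s : ℝ} (hs : 0 < s) :
    MellinConvergent (fun t => Real.log t • (Real.exp (-t) : ℂ)) (s : ℂ) ∧
      HasDerivAt Complex.GammaIntegral
        (∫ t : ℝ in Set.Ioi 0, (t : ℂ) ^ ((s : ℂ) - 1) * (Real.log t * Real.exp (-t))) (s : ℂ) := by
  have hs' : 0 < (s : ℂ).re := by simpa using hs
  constructor
  · refine (mellin_hasDerivAt_of_isBigO_rpow (E := ℂ) ?_ ?_ (lt_add_one _) ?_ hs').1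
    · refine (Continuous.continuousOn ?_).locallyIntegrableOn measurableSet_Ioi
      exact Complex.continuous_ofReal.comp (Real.continuous_exp.comp continuous_neg)
    · rw [← Asymptotics.isBigO_norm_left]
      simp_rw [Complex.norm_real,
        Asymptotics.isBigO_norm_left]
      simpa only [neg_one_mul] using
        (isLittleO_exp_neg_mul_rpow_atTop zero_lt_one _).isBigO
    · simp_rw [neg_zero, Real.rpow_zero]
      refine Asymptotics.isBigO_const_of_tendsto (?_ : Tendsto _ _ (nhds (1 : ℂ))) one_ne_zero
      rw [(by simp : (1 : ℂ) = Real.exp (-0))]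
      exact (Complex.continuous_ofReal.comp
        (Real.continuous_exp.comp continuous_neg)).continuousWithinAt
  · have := Complex.hasDerivAt_GammaIntegral hs'
    exact this

lemma Glog_integrableOn {s : ℝ} (hs : 0 < s) :
    IntegrableOn (fun t => Real.log t * t ^ (s - 1) * Real.exp (-t)) (Set.Ioi (0:ℝ)) := by
  have hM := (mellin_pack hs).1
  unfold MellinConvergent at hM
  have heq : ∀ t ∈ Set.Ioi (0:ℝ),
      (t : ℂ) ^ ((s:ℂ) - 1) • (Real.log t • (Real.exp (-t) : ℂ)) =
        ((Real.log t * t ^ (s - 1) * Real.exp (-t) : ℝ) : ℂ) := by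
    intro t ht
    have ht' : (0:ℝ) < t := ht
    have : (t : ℂ) ^ ((s:ℂ) - 1) = ((t ^ (s - 1) : ℝ) : ℂ) := by
      rw [show ((s:ℂ) - 1) = ((s - 1 : ℝ) : ℂ) by push_cast; ring,
        Complex.ofReal_cpow ht'.le]
    rw [this]
    simp only [smul_eq_mul, Complex.real_smul]
    push_cast
    ring
  have hM' : IntegrableOn
      (fun t => ((Real.log t * t ^ (s - 1) * Real.exp (-t) : ℝ) : ℂ)) (Set.Ioi (0:ℝ)) := by
    refine hM.congr ?_
    exact (ae_restrict_iff' measurableSet_Ioi).2 (ae_of_all _ heq)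
  have hre := hM'.re
  simp [← Complex.ofReal_neg, Complex.exp_ofReal_re] at hre
  exact hre

lemma hasDerivAt_realGamma {s : ℝ} (hs : 0 < s) :
    HasDerivAt Real.Gamma (Glog s) s := by
  have hs' : 0 < (s : ℂ).re := by simpa using hs
  have hD := (mellin_pack hs).2
  have hre := hD.real_of_complex
  -- identify the derivative
  have hval : (∫ t : ℝ in Set.Ioi 0,
      (t : ℂ) ^ ((s : ℂ) - 1) * (Real.log t * Real.exp (-t))).re = Glog s := by
    have heq : ∀ t ∈ Set.Ioi (0:ℝ),
        (t : ℂ) ^ ((s:ℂ) - 1) * (Real.log t * Real.exp (-t)) =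
          ((Real.log t * t ^ (s - 1) * Real.exp (-t) : ℝ) : ℂ) := by
      intro t ht
      have ht' : (0:ℝ) < t := ht
      have : (t : ℂ) ^ ((s:ℂ) - 1) = ((t ^ (s - 1) : ℝ) : ℂ) := by
        rw [show ((s:ℂ) - 1) = ((s - 1 : ℝ) : ℂ) by push_cast; ring,
          Complex.ofReal_cpow ht'.le]
      rw [this]
      push_cast
      ring
    rw [MeasureTheory.setIntegral_congr_fun measurableSet_Ioi heq]
    have cc : ∀ r : ℝ, Complex.ofReal r = @RCLike.ofReal ℂ _ r := fun r => rfl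
    conv_lhs => enter [1, 2, t]; rw [cc]
    rw [_root_.integral_ofReal, ← cc, Complex.ofReal_re]
    rfl
  rw [hval] at hre
  -- the real part of GammaIntegral agrees with Real.Gamma near s
  have hev : (fun x : ℝ => (Complex.GammaIntegral x).re) =ᶠ[nhds s] Real.Gamma := by
    filter_upwards [isOpen_Ioi.mem_nhds (show s ∈ Set.Ioi (0:ℝ) from hs)] with x hx
    have hx' : 0 < (x : ℂ).re := by simpa using (hx : (0:ℝ) < x)
    rw [← Complex.Gamma_eq_integral hx', Complex.Gamma_ofReal, Complex.ofReal_re]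
  exact hre.congr_of_eventuallyEq hev.symm

lemma Glog_add_one {s : ℝ} (hs : 0 < s) :
    Glog (s + 1) = s * Glog s + Real.Gamma s := by
  have h1 : HasDerivAt (fun x : ℝ => Real.Gamma (x + 1)) (Glog (s + 1)) s := by
    have := (hasDerivAt_realGamma (by linarith : (0:ℝ) < s + 1)).comp s
      ((hasDerivAt_id s).add_const 1)
    rw [mul_one] at this
    exact this
  have h2 : HasDerivAt (fun x : ℝ => x * Real.Gamma x)
      (1 * Real.Gamma s + s * Glog s) s :=
    (hasDerivAt_id s).mul (hasDerivAt_realGamma hs)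
  have hev : (fun x : ℝ => Real.Gamma (x + 1)) =ᶠ[nhds s] fun x : ℝ => x * Real.Gamma x := by
    filter_upwards [isOpen_Ioi.mem_nhds (show s ∈ Set.Ioi (0:ℝ) from hs)] with x hx
    exact Real.Gamma_add_one (ne_of_gt hx)
  have := (h1.congr_of_eventuallyEq hev.symm).unique h2
  linarith [this]

lemma base_integrable {s : ℝ} (hs : 0 < s) :
    IntegrableOn (fun t => t ^ (s - 1) * Real.exp (-t)) (Set.Ioi (0:ℝ)) := by
  refine (Real.GammaIntegral_convergent hs).congr_fun (fun t ht => ?_) measurableSet_Ioi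
  ring

lemma base_integral {s : ℝ} (hs : 0 < s) :
    ∫ t in Set.Ioi (0:ℝ), t ^ (s - 1) * Real.exp (-t) = Real.Gamma s := by
  rw [Real.Gamma_eq_integral hs]
  refine MeasureTheory.setIntegral_congr_fun measurableSet_Ioi fun t ht => ?_
  ring

-- pointwise simplification of the substituted integrand
lemma subst_pointwise {s b : ℝ} (hb : 0 < b) (c d : ℝ) {t : ℝ} (ht : 0 < t) :
    (b / t ^ 2) * ((c + d * Real.log (b / t)) * ((b / t) ^ (-s - 1) * Real.exp (-b / (b / t)))) =
      (c + d * Real.log b) * b ^ (-s) * (t ^ (s - 1) * Real.exp (-t)) -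
        d * b ^ (-s) * (Real.log t * t ^ (s - 1) * Real.exp (-t)) := by
  have h1 : -b / (b / t) = -t := by field_simp
  have h2 : Real.log (b / t) = Real.log b - Real.log t := Real.log_div (ne_of_gt hb) (ne_of_gt ht)
  have h3 : (b / t ^ 2) * (b / t) ^ (-s - 1) = b ^ (-s) * t ^ (s - 1) := by
    have e1 : (b / t) ^ (-s - 1) = b ^ (-s-1) / t ^ (-s-1) := Real.div_rpow hb.le ht.le _
    have e2 : t ^ (-s - 1) = (t ^ s)⁻¹ * t⁻¹ := by
      rw [show -s-1 = -s + -1 by ring, Real.rpow_add ht, Real.rpow_neg ht.le,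
        Real.rpow_neg_one]
    have e3 : b ^ (-s - 1) = b ^ (-s) * b⁻¹ := by
      rw [show -s-1 = -s + -1 by ring, Real.rpow_add hb, Real.rpow_neg_one]
    have e4 : t ^ (s - 1) = t ^ s * t⁻¹ := by
      rw [show s-1 = s + -1 by ring, Real.rpow_add ht, Real.rpow_neg_one]
    have e5 : b ^ (-s) = (b ^ s)⁻¹ := Real.rpow_neg hb.le s
    have hts : (0:ℝ) < t ^ s := Real.rpow_pos_of_pos ht s
    have hbs : (0:ℝ) < b ^ s := Real.rpow_pos_of_pos hb s
    rw [e1, e2, e3, e4, e5]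
    field_simp
  calc (b / t ^ 2) * ((c + d * Real.log (b / t)) * ((b / t) ^ (-s - 1) * Real.exp (-b / (b / t))))
      = (c + d * Real.log (b/t)) * ((b / t ^ 2) * (b / t) ^ (-s - 1)) * Real.exp (-b / (b/t)) := by
        ring
    _ = (c + d * (Real.log b - Real.log t)) * (b ^ (-s) * t ^ (s-1)) * Real.exp (-t) := by
        rw [h1, h2, h3]
    _ = _ := by ring

/-- Main one-dimensional integral computation. -/
lemma transform {s b : ℝ} (hs : 0 < s) (hb : 0 < b) (c d : ℝ) :
    IntegrableOn (fun x => (c + d * Real.log x) * (x ^ (-s - 1) * Real.exp (-b / x)))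
        (Set.Ioi (0:ℝ)) ∧
      ∫ x in Set.Ioi (0:ℝ), (c + d * Real.log x) * (x ^ (-s - 1) * Real.exp (-b / x)) =
        (c + d * Real.log b) * b ^ (-s) * Real.Gamma s - d * b ^ (-s) * Glog s := by
  set g : ℝ → ℝ := fun x => (c + d * Real.log x) * (x ^ (-s - 1) * Real.exp (-b / x)) with hg
  have hInt : IntegrableOn (fun t =>
      (c + d * Real.log b) * b ^ (-s) * (t ^ (s - 1) * Real.exp (-t)) -
        d * b ^ (-s) * (Real.log t * t ^ (s - 1) * Real.exp (-t))) (Set.Ioi (0:ℝ)) :=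
    ((base_integrable hs).const_mul _).sub ((Glog_integrableOn hs).const_mul _)
  have hcongr : ∀ t ∈ Set.Ioi (0:ℝ), (b / t ^ 2) * g (b / t) =
      (c + d * Real.log b) * b ^ (-s) * (t ^ (s - 1) * Real.exp (-t)) -
        d * b ^ (-s) * (Real.log t * t ^ (s - 1) * Real.exp (-t)) := by
    intro t ht
    exact subst_pointwise hb c d ht
  constructor
  · rw [subst_integrableOn b hb g]
    exact hInt.congr_fun (fun t ht => (hcongr t ht).symm) measurableSet_Ioi
  · rw [show (∫ x in Set.Ioi (0:ℝ), g x) = ∫ t in Set.Ioi (0:ℝ), (b / t ^ 2) * g (b / t) from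
      subst_integral b hb g,
      MeasureTheory.setIntegral_congr_fun measurableSet_Ioi hcongr,
      MeasureTheory.integral_sub ((base_integrable hs).const_mul _)
        ((Glog_integrableOn hs).const_mul _),
      MeasureTheory.integral_const_mul, MeasureTheory.integral_const_mul, base_integral hs]
    rfl

noncomputable def psiG (s : ℝ) : ℝ := Glog s / Real.Gamma s

lemma master {α b : ℝ} (hα : 0 < α) (hb : 0 < b) (A B C D E : ℝ) :
    IntegrableOn (fun x => (A + B * Real.log x + C * x⁻¹ + D * (x⁻¹ * x⁻¹) +
        E * (Real.log x * x⁻¹)) * invGammaPdf α b x) (Set.Ioi (0:ℝ)) ∧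
      ∫ x in Set.Ioi (0:ℝ), (A + B * Real.log x + C * x⁻¹ + D * (x⁻¹ * x⁻¹) +
          E * (Real.log x * x⁻¹)) * invGammaPdf α b x
        = A + B * (Real.log b - psiG α) + C * (α / b) + D * (α * (α + 1) / b ^ 2) +
            E * (α / b) * (Real.log b - psiG (α + 1)) := by
  have hα1 : (0:ℝ) < α + 1 := by linarith
  have hα2 : (0:ℝ) < α + 2 := by linarith
  set k : ℝ := b ^ α / Real.Gamma α with hk
  have key : ∀ x ∈ Set.Ioi (0:ℝ),
      (A + B * Real.log x + C * x⁻¹ + D * (x⁻¹ * x⁻¹) + E * (Real.log x * x⁻¹)) *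
          invGammaPdf α b x =
        k * ((A + B * Real.log x) * (x ^ (-α - 1) * Real.exp (-b / x))) +
          k * ((C + E * Real.log x) * (x ^ (-(α+1) - 1) * Real.exp (-b / x))) +
          k * ((D + 0 * Real.log x) * (x ^ (-(α+2) - 1) * Real.exp (-b / x))) := by
    intro x hx
    have hx' : (0:ℝ) < x := hx
    have e1 : x ^ (-(α+1) - 1) = x ^ (-α - 1) * x⁻¹ := by
      rw [show -(α+1) - 1 = (-α - 1) + -1 by ring, Real.rpow_add hx', Real.rpow_neg_one]
    have e2 : x ^ (-(α+2) - 1) = x ^ (-α - 1) * (x⁻¹ * x⁻¹) := by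
      rw [show -(α+2) - 1 = ((-α - 1) + -1) + -1 by ring, Real.rpow_add hx',
        Real.rpow_add hx', Real.rpow_neg_one]
      ring
    rw [e1, e2, invGammaPdf]
    ring
  have t1 := transform hα hb A B
  have t2 := transform hα1 hb C E
  have t3 := transform hα2 hb D 0
  have hInt : IntegrableOn (fun x =>
      k * ((A + B * Real.log x) * (x ^ (-α - 1) * Real.exp (-b / x))) +
        k * ((C + E * Real.log x) * (x ^ (-(α+1) - 1) * Real.exp (-b / x))) +
        k * ((D + 0 * Real.log x) * (x ^ (-(α+2) - 1) * Real.exp (-b / x))))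
      (Set.Ioi (0:ℝ)) :=
    ((t1.1.const_mul k).add (t2.1.const_mul k)).add (t3.1.const_mul k)
  constructor
  · exact hInt.congr_fun (fun x hx => (key x hx).symm) measurableSet_Ioi
  · have hf1 : IntegrableOn (fun x =>
        k * ((A + B * Real.log x) * (x ^ (-α - 1) * Real.exp (-b / x)))) (Set.Ioi (0:ℝ)) :=
      t1.1.const_mul k
    have hf2 : IntegrableOn (fun x =>
        k * ((C + E * Real.log x) * (x ^ (-(α+1) - 1) * Real.exp (-b / x)))) (Set.Ioi (0:ℝ)) :=
      t2.1.const_mul k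
    have hf3 : IntegrableOn (fun x =>
        k * ((D + 0 * Real.log x) * (x ^ (-(α+2) - 1) * Real.exp (-b / x)))) (Set.Ioi (0:ℝ)) :=
      t3.1.const_mul k
    have hf12 : IntegrableOn (fun x =>
        k * ((A + B * Real.log x) * (x ^ (-α - 1) * Real.exp (-b / x))) +
          k * ((C + E * Real.log x) * (x ^ (-(α+1) - 1) * Real.exp (-b / x))))
        (Set.Ioi (0:ℝ)) := hf1.add hf2
    rw [MeasureTheory.setIntegral_congr_fun measurableSet_Ioi key,
      MeasureTheory.integral_add hf12 hf3,
      MeasureTheory.integral_add hf1 hf2,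
      MeasureTheory.integral_const_mul, MeasureTheory.integral_const_mul,
      MeasureTheory.integral_const_mul, t1.2, t2.2, t3.2]
    have hΓ : 0 < Real.Gamma α := Real.Gamma_pos_of_pos hα
    have hΓ1 : Real.Gamma (α + 1) = α * Real.Gamma α := Real.Gamma_add_one (ne_of_gt hα)
    have hΓ2 : Real.Gamma (α + 2) = (α + 1) * (α * Real.Gamma α) := by
      rw [show α + 2 = (α + 1) + 1 by ring, Real.Gamma_add_one (ne_of_gt hα1), hΓ1]
    have hb1 : b ^ (-(α+1)) = b ^ (-α) * b⁻¹ := by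
      rw [show -(α+1) = -α + -1 by ring, Real.rpow_add hb, Real.rpow_neg_one]
    have hb2 : b ^ (-(α+2)) = b ^ (-α) * (b⁻¹ * b⁻¹) := by
      rw [show -(α+2) = (-α + -1) + -1 by ring, Real.rpow_add hb, Real.rpow_add hb,
        Real.rpow_neg_one]
      ring
    have hbb : b ^ α * b ^ (-α) = 1 := by
      rw [← Real.rpow_add hb]; simp
    have hbα : b ^ (-α) = (b ^ α)⁻¹ := by
      rw [Real.rpow_neg hb.le]
    have hbαpos : (0:ℝ) < b ^ α := Real.rpow_pos_of_pos hb α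
    rw [hΓ1, hΓ2, hb1, hb2, hbα, hk, psiG, psiG, hΓ1]
    field_simp
    ring

lemma pdf_pos {α b x : ℝ} (hα : 0 < α) (hb : 0 < b) (hx : 0 < x) :
    0 < invGammaPdf α b x := by
  have hΓ : 0 < Real.Gamma α := Real.Gamma_pos_of_pos hα
  have h1 : 0 < b ^ α := Real.rpow_pos_of_pos hb α
  have h2 : 0 < x ^ (-α - 1) := Real.rpow_pos_of_pos hx _
  unfold invGammaPdf
  positivity

lemma log_pdf {α b x : ℝ} (hα : 0 < α) (hb : 0 < b) (hx : 0 < x) :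
    Real.log (invGammaPdf α b x) =
      α * Real.log b - Real.log (Real.Gamma α) + (-α - 1) * Real.log x - b / x := by
  have hΓ : 0 < Real.Gamma α := Real.Gamma_pos_of_pos hα
  have h1 : 0 < b ^ α := Real.rpow_pos_of_pos hb α
  have h2 : 0 < x ^ (-α - 1) := Real.rpow_pos_of_pos hx _
  unfold invGammaPdf
  rw [Real.log_mul (by positivity) (Real.exp_ne_zero _),
    Real.log_mul (by positivity) (ne_of_gt h2),
    Real.log_div (ne_of_gt h1) (ne_of_gt hΓ), Real.log_exp,
    Real.log_rpow hb, Real.log_rpow hx]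
  ring

lemma exp_lbar {α₁ α₂ lam x₁ x₂ : ℝ} (h₁ : 0 < α₁) (h₂ : 0 < α₂) (hlam : 0 < lam)
    (hx₁ : 0 < x₁) (hx₂ : 0 < x₂) :
    Real.exp (invGammaLbar α₁ α₂ lam x₁ x₂) =
      invGammaPdf α₁ ((α₁ + α₂) / lam) x₁ * invGammaPdf α₂ ((α₁ + α₂) / lam) x₂ := by
  have hb : 0 < (α₁ + α₂) / lam := by positivity
  rw [invGammaLbar, Real.exp_add, Real.exp_log (pdf_pos h₁ hb hx₁),
    Real.exp_log (pdf_pos h₂ hb hx₂)]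

lemma lbar_formula {α₂ lam x₁ x₂ : ℝ} (h₂ : 0 < α₂) (hlam : 0 < lam)
    (hx₁ : 0 < x₁) (hx₂ : 0 < x₂) {a : ℝ} (ha : 0 < a) :
    invGammaLbar a α₂ lam x₁ x₂ =
      (a + α₂) * Real.log ((a + α₂) / lam) - Real.log (Real.Gamma a) -
        Real.log (Real.Gamma α₂) + (-a - 1) * Real.log x₁ +
        (-α₂ - 1) * Real.log x₂ - ((a + α₂) / lam) * (x₁⁻¹ + x₂⁻¹) := by
  have hb : 0 < (a + α₂) / lam := by positivity
  rw [invGammaLbar, log_pdf ha hb hx₁, log_pdf h₂ hb hx₂]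
  field_simp
  ring

lemma deriv_alpha1 {α₁ α₂ lam x₁ x₂ : ℝ} (h₁ : 0 < α₁) (h₂ : 0 < α₂) (hlam : 0 < lam)
    (hx₁ : 0 < x₁) (hx₂ : 0 < x₂) :
    deriv (fun a => invGammaLbar a α₂ lam x₁ x₂) α₁ =
      Real.log ((α₁ + α₂) / lam) + 1 - Glog α₁ / Real.Gamma α₁ - Real.log x₁ -
        (x₁⁻¹ + x₂⁻¹) / lam := by
  have hb : 0 < (α₁ + α₂) / lam := by positivity
  have hΓ : 0 < Real.Gamma α₁ := Real.Gamma_pos_of_pos h₁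
  -- the smooth model function
  set φ : ℝ → ℝ := fun a =>
      (a + α₂) * Real.log ((a + α₂) / lam) - Real.log (Real.Gamma a) -
        Real.log (Real.Gamma α₂) + (-a - 1) * Real.log x₁ +
        (-α₂ - 1) * Real.log x₂ - ((a + α₂) / lam) * (x₁⁻¹ + x₂⁻¹) with hφ
  have h1 : HasDerivAt (fun a : ℝ => a + α₂) 1 α₁ := (hasDerivAt_id α₁).add_const α₂
  have h2 : HasDerivAt (fun a : ℝ => Real.log ((a + α₂) / lam))
      ((1 / lam) / ((α₁ + α₂) / lam)) α₁ := (h1.div_const lam).log (ne_of_gt hb)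
  have h3 : HasDerivAt (fun a : ℝ => Real.log (Real.Gamma a))
      (Glog α₁ / Real.Gamma α₁) α₁ := (hasDerivAt_realGamma h₁).log (ne_of_gt hΓ)
  have h4 : HasDerivAt (fun a : ℝ => (-a - 1) * Real.log x₁) (-1 * Real.log x₁) α₁ :=
    (((hasDerivAt_id α₁).neg).sub_const 1).mul_const (Real.log x₁)
  have h5 : HasDerivAt (fun a : ℝ => ((a + α₂) / lam) * (x₁⁻¹ + x₂⁻¹))
      ((1 / lam) * (x₁⁻¹ + x₂⁻¹)) α₁ := by
    simpa using (h1.div_const lam).mul_const (x₁⁻¹ + x₂⁻¹)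
  have hD : HasDerivAt φ
      ((1 * Real.log ((α₁ + α₂) / lam) + (α₁ + α₂) * ((1 / lam) / ((α₁ + α₂) / lam))) -
        Glog α₁ / Real.Gamma α₁ + -1 * Real.log x₁ - (1 / lam) * (x₁⁻¹ + x₂⁻¹)) α₁ := by
    exact (((((h1.mul h2).sub h3).sub_const (Real.log (Real.Gamma α₂))).add h4).add_const
      ((-α₂ - 1) * Real.log x₂)).sub h5
  have hev : (fun a => invGammaLbar a α₂ lam x₁ x₂) =ᶠ[nhds α₁] φ := by
    filter_upwards [isOpen_Ioi.mem_nhds (show α₁ ∈ Set.Ioi (0:ℝ) from h₁)] with a ha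
    exact lbar_formula h₂ hlam hx₁ hx₂ ha
  rw [(hD.congr_of_eventuallyEq hev).deriv]
  have : (α₁ + α₂) * ((1 / lam) / ((α₁ + α₂) / lam)) = 1 := by
    field_simp
  rw [this]
  ring

lemma lbar_formula2 {α₁ lam x₁ x₂ : ℝ} (h₁ : 0 < α₁) (hlam : 0 < lam)
    (hx₁ : 0 < x₁) (hx₂ : 0 < x₂) {a : ℝ} (ha : 0 < a) :
    invGammaLbar α₁ a lam x₁ x₂ =
      (α₁ + a) * Real.log ((α₁ + a) / lam) - Real.log (Real.Gamma a) -
        Real.log (Real.Gamma α₁) + (-a - 1) * Real.log x₂ +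
        (-α₁ - 1) * Real.log x₁ - ((α₁ + a) / lam) * (x₁⁻¹ + x₂⁻¹) := by
  have hb : 0 < (α₁ + a) / lam := by positivity
  rw [invGammaLbar, log_pdf h₁ hb hx₁, log_pdf ha hb hx₂]
  field_simp
  ring

lemma deriv_alpha2 {α₁ α₂ lam x₁ x₂ : ℝ} (h₁ : 0 < α₁) (h₂ : 0 < α₂) (hlam : 0 < lam)
    (hx₁ : 0 < x₁) (hx₂ : 0 < x₂) :
    deriv (fun a => invGammaLbar α₁ a lam x₁ x₂) α₂ =
      Real.log ((α₁ + α₂) / lam) + 1 - Glog α₂ / Real.Gamma α₂ - Real.log x₂ -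
        (x₁⁻¹ + x₂⁻¹) / lam := by
  have hb : 0 < (α₁ + α₂) / lam := by positivity
  have hΓ : 0 < Real.Gamma α₂ := Real.Gamma_pos_of_pos h₂
  set φ : ℝ → ℝ := fun a =>
      (α₁ + a) * Real.log ((α₁ + a) / lam) - Real.log (Real.Gamma a) -
        Real.log (Real.Gamma α₁) + (-a - 1) * Real.log x₂ +
        (-α₁ - 1) * Real.log x₁ - ((α₁ + a) / lam) * (x₁⁻¹ + x₂⁻¹) with hφ
  have h1 : HasDerivAt (fun a : ℝ => α₁ + a) 1 α₂ := (hasDerivAt_id α₂).const_add α₁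
  have h2 : HasDerivAt (fun a : ℝ => Real.log ((α₁ + a) / lam))
      ((1 / lam) / ((α₁ + α₂) / lam)) α₂ := (h1.div_const lam).log (ne_of_gt hb)
  have h3 : HasDerivAt (fun a : ℝ => Real.log (Real.Gamma a))
      (Glog α₂ / Real.Gamma α₂) α₂ := (hasDerivAt_realGamma h₂).log (ne_of_gt hΓ)
  have h4 : HasDerivAt (fun a : ℝ => (-a - 1) * Real.log x₂) (-1 * Real.log x₂) α₂ :=
    (((hasDerivAt_id α₂).neg).sub_const 1).mul_const (Real.log x₂)
  have h5 : HasDerivAt (fun a : ℝ => ((α₁ + a) / lam) * (x₁⁻¹ + x₂⁻¹))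
      ((1 / lam) * (x₁⁻¹ + x₂⁻¹)) α₂ := by
    simpa using (h1.div_const lam).mul_const (x₁⁻¹ + x₂⁻¹)
  have hD : HasDerivAt φ
      ((1 * Real.log ((α₁ + α₂) / lam) + (α₁ + α₂) * ((1 / lam) / ((α₁ + α₂) / lam))) -
        Glog α₂ / Real.Gamma α₂ + -1 * Real.log x₂ - (1 / lam) * (x₁⁻¹ + x₂⁻¹)) α₂ := by
    exact (((((h1.mul h2).sub h3).sub_const (Real.log (Real.Gamma α₁))).add h4).add_const
      ((-α₁ - 1) * Real.log x₁)).sub h5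
  have hev : (fun a => invGammaLbar α₁ a lam x₁ x₂) =ᶠ[nhds α₂] φ := by
    filter_upwards [isOpen_Ioi.mem_nhds (show α₂ ∈ Set.Ioi (0:ℝ) from h₂)] with a ha
    exact lbar_formula2 h₁ hlam hx₁ hx₂ ha
  rw [(hD.congr_of_eventuallyEq hev).deriv]
  have : (α₁ + α₂) * ((1 / lam) / ((α₁ + α₂) / lam)) = 1 := by field_simp
  rw [this]
  ring

lemma deriv_lam {α₁ α₂ lam x₁ x₂ : ℝ} (h₁ : 0 < α₁) (h₂ : 0 < α₂) (hlam : 0 < lam)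
    (hx₁ : 0 < x₁) (hx₂ : 0 < x₂) :
    deriv (fun L => invGammaLbar α₁ α₂ L x₁ x₂) lam =
      -((α₁ + α₂) / lam) + (α₁ + α₂) / lam ^ 2 * (x₁⁻¹ + x₂⁻¹) := by
  have hb : 0 < (α₁ + α₂) / lam := by positivity
  set φ : ℝ → ℝ := fun L =>
      (α₁ + α₂) * Real.log ((α₁ + α₂) / L) - Real.log (Real.Gamma α₁) -
        Real.log (Real.Gamma α₂) + ((-α₁ - 1) * Real.log x₁ +
        (-α₂ - 1) * Real.log x₂) - ((α₁ + α₂) / L) * (x₁⁻¹ + x₂⁻¹) with hφ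
  have h1 : HasDerivAt (fun L : ℝ => (α₁ + α₂) / L) (-((α₁ + α₂) / lam ^ 2)) lam := by
    have := (hasDerivAt_inv (ne_of_gt hlam)).const_mul (α₁ + α₂)
    simpa [div_eq_mul_inv, neg_mul, mul_comm] using this
  have h2 : HasDerivAt (fun L : ℝ => Real.log ((α₁ + α₂) / L))
      (-((α₁ + α₂) / lam ^ 2) / ((α₁ + α₂) / lam)) lam := h1.log (ne_of_gt hb)
  have h5 : HasDerivAt (fun L : ℝ => ((α₁ + α₂) / L) * (x₁⁻¹ + x₂⁻¹))
      (-((α₁ + α₂) / lam ^ 2) * (x₁⁻¹ + x₂⁻¹)) lam := h1.mul_const _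
  have hD : HasDerivAt φ
      ((α₁ + α₂) * (-((α₁ + α₂) / lam ^ 2) / ((α₁ + α₂) / lam)) -
        -((α₁ + α₂) / lam ^ 2) * (x₁⁻¹ + x₂⁻¹)) lam := by
    exact ((((h2.const_mul (α₁ + α₂)).sub_const (Real.log (Real.Gamma α₁))).sub_const
      (Real.log (Real.Gamma α₂))).add_const
      ((-α₁ - 1) * Real.log x₁ + (-α₂ - 1) * Real.log x₂)).sub h5
  have hev : (fun L => invGammaLbar α₁ α₂ L x₁ x₂) =ᶠ[nhds lam] φ := by
    filter_upwards [isOpen_Ioi.mem_nhds (show lam ∈ Set.Ioi (0:ℝ) from hlam)] with L hL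
    have hb' : 0 < (α₁ + α₂) / L := by
      have : (0:ℝ) < L := hL
      positivity
    rw [invGammaLbar, log_pdf h₁ hb' hx₁, log_pdf h₂ hb' hx₂, hφ]
    have : (0:ℝ) < L := hL
    field_simp
    ring
  rw [(hD.congr_of_eventuallyEq hev).deriv]
  have hs : (α₁ + α₂) * (-((α₁ + α₂) / lam ^ 2) / ((α₁ + α₂) / lam)) = -((α₁ + α₂) / lam) := by
    field_simp
  rw [hs]
  ring


lemma case1 {α₁ α₂ lam : ℝ} (h₁ : 0 < α₁) (h₂ : 0 < α₂) (hlam : 0 < lam) :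
    ∫ x₁ in Set.Ioi (0 : ℝ), ∫ x₂ in Set.Ioi (0 : ℝ),
        deriv (fun a => invGammaLbar a α₂ lam x₁ x₂) α₁ *
          deriv (fun L => invGammaLbar α₁ α₂ L x₁ x₂) lam *
          Real.exp (invGammaLbar α₁ α₂ lam x₁ x₂) = 0 := by
  have hb : (0:ℝ) < (α₁ + α₂) / lam := by positivity
  have hout : ∀ x₁ ∈ Set.Ioi (0:ℝ),
      (∫ x₂ in Set.Ioi (0 : ℝ),
        deriv (fun a => invGammaLbar a α₂ lam x₁ x₂) α₁ *
          deriv (fun L => invGammaLbar α₁ α₂ L x₁ x₂) lam *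
          Real.exp (invGammaLbar α₁ α₂ lam x₁ x₂)) =
      ((((α₁ + α₂) / lam ^ 2) * (-((Real.log ((α₁ + α₂) / lam) + 1 - Glog α₁ / Real.Gamma α₁) * lam) + (α₂ / ((α₁ + α₂) / lam)) * ((Real.log ((α₁ + α₂) / lam) + 1 - Glog α₁ / Real.Gamma α₁) + 1) - (α₂ * (α₂ + 1) / ((α₁ + α₂) / lam) ^ 2) / lam)) + (((α₁ + α₂) / lam ^ 2) * (lam - (α₂ / ((α₁ + α₂) / lam)))) * Real.log x₁ + (((α₁ + α₂) / lam ^ 2) * ((Real.log ((α₁ + α₂) / lam) + 1 - Glog α₁ / Real.Gamma α₁) + 1 - 2 * (α₂ / ((α₁ + α₂) / lam)) / lam)) * x₁⁻¹ + (((α₁ + α₂) / lam ^ 2) * (-(1 / lam))) * (x₁⁻¹ * x₁⁻¹) +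
        (-((α₁ + α₂) / lam ^ 2)) * (Real.log x₁ * x₁⁻¹)) * invGammaPdf α₁ ((α₁ + α₂) / lam) x₁ := by
    intro x₁ hx₁
    have hx₁' : (0:ℝ) < x₁ := hx₁
    have hin : ∀ x₂ ∈ Set.Ioi (0:ℝ),
        deriv (fun a => invGammaLbar a α₂ lam x₁ x₂) α₁ *
          deriv (fun L => invGammaLbar α₁ α₂ L x₁ x₂) lam *
          Real.exp (invGammaLbar α₁ α₂ lam x₁ x₂) =
        ((invGammaPdf α₁ ((α₁ + α₂) / lam) x₁ * ((α₁ + α₂) / lam ^ 2) * (((Real.log ((α₁ + α₂) / lam) + 1 - Glog α₁ / Real.Gamma α₁) - Real.log x₁ - x₁⁻¹ / lam) * (x₁⁻¹ - lam))) + 0 * Real.log x₂ + (invGammaPdf α₁ ((α₁ + α₂) / lam) x₁ * ((α₁ + α₂) / lam ^ 2) * (((Real.log ((α₁ + α₂) / lam) + 1 - Glog α₁ / Real.Gamma α₁) - Real.log x₁ - x₁⁻¹ / lam) - (x₁⁻¹ - lam) / lam)) * x₂⁻¹ + (invGammaPdf α₁ ((α₁ + α₂) / lam) x₁ * ((α₁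 + α₂) / lam ^ 2) * (-(1 / lam))) * (x₂⁻¹ * x₂⁻¹) +
          0 * (Real.log x₂ * x₂⁻¹)) * invGammaPdf α₂ ((α₁ + α₂) / lam) x₂ := by
      intro x₂ hx₂
      have hx₂' : (0:ℝ) < x₂ := hx₂
      rw [deriv_alpha1 h₁ h₂ hlam hx₁' hx₂', deriv_lam h₁ h₂ hlam hx₁' hx₂',
        exp_lbar h₁ h₂ hlam hx₁' hx₂']
      field_simp [ne_of_gt hlam, ne_of_gt h₁, ne_of_gt h₂, (Real.Gamma_pos_of_pos h₁).ne', (Real.Gamma_pos_of_pos h₂).ne', (Real.Gamma_pos_of_pos (show (0:ℝ) < α₁ + 1 by linarith)).ne', (Real.Gamma_pos_of_pos (show (0:ℝ) < α₂ + 1 by linarith)).ne', (show (0:ℝ) < α₁ + α₂ by linarith).ne', ne_of_gt hx₁', ne_of_gt hx₂']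
      ring
    rw [MeasureTheory.setIntegral_congr_fun measurableSet_Ioi hin,
      (master h₂ hb (invGammaPdf α₁ ((α₁ + α₂) / lam) x₁ * ((α₁ + α₂) / lam ^ 2) * (((Real.log ((α₁ + α₂) / lam) + 1 - Glog α₁ / Real.Gamma α₁) - Real.log x₁ - x₁⁻¹ / lam) * (x₁⁻¹ - lam))) 0 (invGammaPdf α₁ ((α₁ + α₂) / lam) x₁ * ((α₁ + α₂) / lam ^ 2) * (((Real.log ((α₁ + α₂) / lam) + 1 - Glog α₁ / Real.Gamma α₁) - Real.log x₁ - x₁⁻¹ / lam) - (x₁⁻¹ - lam) / lam)) (invGammaPdf α₁ ((α₁ + α₂) / lam) x₁ * ((α₁ + α₂) / lam ^ 2) * (-(1 / lam))) 0).2]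
    have hΓ1 : Real.Gamma α₁ ≠ 0 := (Real.Gamma_pos_of_pos h₁).ne'
    have hΓ2 : Real.Gamma α₂ ≠ 0 := (Real.Gamma_pos_of_pos h₂).ne'
    have hs : (0:ℝ) < α₁ + α₂ := by linarith
    field_simp [ne_of_gt hlam, ne_of_gt h₁, ne_of_gt h₂, (Real.Gamma_pos_of_pos h₁).ne', (Real.Gamma_pos_of_pos h₂).ne', (Real.Gamma_pos_of_pos (show (0:ℝ) < α₁ + 1 by linarith)).ne', (Real.Gamma_pos_of_pos (show (0:ℝ) < α₂ + 1 by linarith)).ne', (show (0:ℝ) < α₁ + α₂ by linarith).ne']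
    ring
  rw [MeasureTheory.setIntegral_congr_fun measurableSet_Ioi hout,
    (master h₁ hb (((α₁ + α₂) / lam ^ 2) * (-((Real.log ((α₁ + α₂) / lam) + 1 - Glog α₁ / Real.Gamma α₁) * lam) + (α₂ / ((α₁ + α₂) / lam)) * ((Real.log ((α₁ + α₂) / lam) + 1 - Glog α₁ / Real.Gamma α₁) + 1) - (α₂ * (α₂ + 1) / ((α₁ + α₂) / lam) ^ 2) / lam)) (((α₁ + α₂) / lam ^ 2) * (lam - (α₂ / ((α₁ + α₂) / lam)))) (((α₁ + α₂) / lam ^ 2) * ((Real.log ((α₁ + α₂) / lam) + 1 - Glog α₁ / Real.Gamma α₁) + 1 - 2 * (α₂ / ((α₁ + α₂) / lam)) / lam)) (((α₁ + α₂) / lam ^ 2) * (-(1 / lam))) (-((α₁ + α₂) / lam ^ 2))).2]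
  unfold psiG
  rw [Glog_add_one h₁, Real.Gamma_add_one (ne_of_gt h₁)]
  have hΓ : (0:ℝ) < Real.Gamma α₁ := Real.Gamma_pos_of_pos h₁
  have hs : (0:ℝ) < α₁ + α₂ := by linarith
  field_simp [ne_of_gt hlam, ne_of_gt h₁, ne_of_gt h₂, (Real.Gamma_pos_of_pos h₁).ne', (Real.Gamma_pos_of_pos h₂).ne', (Real.Gamma_pos_of_pos (show (0:ℝ) < α₁ + 1 by linarith)).ne', (Real.Gamma_pos_of_pos (show (0:ℝ) < α₂ + 1 by linarith)).ne', (show (0:ℝ) < α₁ + α₂ by linarith).ne']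
  ring

lemma case2 {α₁ α₂ lam : ℝ} (h₁ : 0 < α₁) (h₂ : 0 < α₂) (hlam : 0 < lam) :
    ∫ x₁ in Set.Ioi (0 : ℝ), ∫ x₂ in Set.Ioi (0 : ℝ),
        deriv (fun a => invGammaLbar α₁ a lam x₁ x₂) α₂ *
          deriv (fun L => invGammaLbar α₁ α₂ L x₁ x₂) lam *
          Real.exp (invGammaLbar α₁ α₂ lam x₁ x₂) = 0 := by
  have hb : (0:ℝ) < (α₁ + α₂) / lam := by positivity
  have hout : ∀ x₁ ∈ Set.Ioi (0:ℝ),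
      (∫ x₂ in Set.Ioi (0 : ℝ),
        deriv (fun a => invGammaLbar α₁ a lam x₁ x₂) α₂ *
          deriv (fun L => invGammaLbar α₁ α₂ L x₁ x₂) lam *
          Real.exp (invGammaLbar α₁ α₂ lam x₁ x₂)) =
      ((((α₁ + α₂) / lam ^ 2) * (-((Real.log ((α₁ + α₂) / lam) + 1 - Glog α₂ / Real.Gamma α₂) * lam) + lam * (Real.log ((α₁ + α₂) / lam) - Glog α₂ / Real.Gamma α₂) + ((Real.log ((α₁ + α₂) / lam) + 1 - Glog α₂ / Real.Gamma α₂) + 1) * (α₂ / ((α₁ + α₂) / lam)) - (α₂ * (α₂ + 1) / ((α₁ + α₂) / lam) ^ 2) / lam - (α₂ / ((α₁ + α₂) / lam)) * (Real.log ((α₁ + α₂) / lam) - (Glog (α₂ + 1) / Real.Gamma (α₂ + 1))))) + 0 * Real.log x₁ + (((α₁ + α₂) / lam ^ 2) * ((Real.log ((α₁ + α₂) / lam) + 1 - Glog α₂ / Real.Gamma α₂) + 1 - (Real.log ((α₁ + α₂) / lam) - Glog α₂ / Real.Gamma α₂) - 2 * (α₂ / ((α₁ + α₂) / lam)) / lam))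 * x₁⁻¹ + (((α₁ + α₂) / lam ^ 2) * (-(1 / lam))) * (x₁⁻¹ * x₁⁻¹) +
        0 * (Real.log x₁ * x₁⁻¹)) * invGammaPdf α₁ ((α₁ + α₂) / lam) x₁ := by
    intro x₁ hx₁
    have hx₁' : (0:ℝ) < x₁ := hx₁
    have hin : ∀ x₂ ∈ Set.Ioi (0:ℝ),
        deriv (fun a => invGammaLbar α₁ a lam x₁ x₂) α₂ *
          deriv (fun L => invGammaLbar α₁ α₂ L x₁ x₂) lam *
          Real.exp (invGammaLbar α₁ α₂ lam x₁ x₂) =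
        ((invGammaPdf α₁ ((α₁ + α₂) / lam) x₁ * ((α₁ + α₂) / lam ^ 2) * (((Real.log ((α₁ + α₂) / lam) + 1 - Glog α₂ / Real.Gamma α₂) - x₁⁻¹ / lam) * (x₁⁻¹ - lam))) + (invGammaPdf α₁ ((α₁ + α₂) / lam) x₁ * ((α₁ + α₂) / lam ^ 2) * (-(x₁⁻¹ - lam))) * Real.log x₂ + (invGammaPdf α₁ ((α₁ + α₂) / lam) x₁ * ((α₁ + α₂) / lam ^ 2) * (((Real.log ((α₁ + α₂) / lam) + 1 - Glog α₂ / Real.Gamma α₂) - x₁⁻¹ / lam) - (x₁⁻¹ - lam) / lam)) * x₂⁻¹ + (invGammaPdf α₁ ((α₁ + α₂) / lam) x₁ * ((α₁ + α₂) / lam ^ 2) * (-(1 / lam))) * (x₂⁻¹ * x₂⁻¹) +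
          (invGammaPdf α₁ ((α₁ + α₂) / lam) x₁ * ((α₁ + α₂) / lam ^ 2) * (-1)) * (Real.log x₂ * x₂⁻¹)) * invGammaPdf α₂ ((α₁ + α₂) / lam) x₂ := by
      intro x₂ hx₂
      have hx₂' : (0:ℝ) < x₂ := hx₂
      rw [deriv_alpha2 h₁ h₂ hlam hx₁' hx₂', deriv_lam h₁ h₂ hlam hx₁' hx₂',
        exp_lbar h₁ h₂ hlam hx₁' hx₂']
      field_simp [ne_of_gt hlam, ne_of_gt h₁, ne_of_gt h₂, (Real.Gamma_pos_of_pos h₁).ne', (Real.Gamma_pos_of_pos h₂).ne', (Real.Gamma_pos_of_pos (show (0:ℝ) < α₁ + 1 by linarith)).ne', (Real.Gamma_pos_of_pos (show (0:ℝ) < α₂ + 1 by linarith)).ne', (show (0:ℝ) < α₁ + α₂ by linarith).ne', ne_of_gt hx₁', ne_of_gt hx₂']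
      ring
    rw [MeasureTheory.setIntegral_congr_fun measurableSet_Ioi hin,
      (master h₂ hb (invGammaPdf α₁ ((α₁ + α₂) / lam) x₁ * ((α₁ + α₂) / lam ^ 2) * (((Real.log ((α₁ + α₂) / lam) + 1 - Glog α₂ / Real.Gamma α₂) - x₁⁻¹ / lam) * (x₁⁻¹ - lam))) (invGammaPdf α₁ ((α₁ + α₂) / lam) x₁ * ((α₁ + α₂) / lam ^ 2) * (-(x₁⁻¹ - lam))) (invGammaPdf α₁ ((α₁ + α₂) / lam) x₁ * ((α₁ + α₂) / lam ^ 2) * (((Real.log ((α₁ + α₂) / lam) + 1 - Glog α₂ / Real.Gamma α₂) - x₁⁻¹ / lam) - (x₁⁻¹ - lam) / lam)) (invGammaPdf α₁ ((α₁ + α₂) / lam) x₁ * ((α₁ + α₂) / lam ^ 2) * (-(1 / lam))) (invGammaPdf α₁ ((α₁ + α₂) / lam) x₁ * ((α₁ + α₂) / lam ^ 2) * (-1))).2]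
    unfold psiG
    have hΓ1 : Real.Gamma α₁ ≠ 0 := (Real.Gamma_pos_of_pos h₁).ne'
    have hΓ2 : Real.Gamma α₂ ≠ 0 := (Real.Gamma_pos_of_pos h₂).ne'
    have hΓ3 : Real.Gamma (α₂ + 1) ≠ 0 := (Real.Gamma_pos_of_pos (by linarith)).ne'
    have hs : (0:ℝ) < α₁ + α₂ := by linarith
    field_simp [ne_of_gt hlam, ne_of_gt h₁, ne_of_gt h₂, (Real.Gamma_pos_of_pos h₁).ne', (Real.Gamma_pos_of_pos h₂).ne', (Real.Gamma_pos_of_pos (show (0:ℝ) < α₁ + 1 by linarith)).ne', (Real.Gamma_pos_of_pos (show (0:ℝ) < α₂ + 1 by linarith)).ne', (show (0:ℝ) < α₁ + α₂ by linarith).ne']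
    ring
  rw [MeasureTheory.setIntegral_congr_fun measurableSet_Ioi hout,
    (master h₁ hb (((α₁ + α₂) / lam ^ 2) * (-((Real.log ((α₁ + α₂) / lam) + 1 - Glog α₂ / Real.Gamma α₂) * lam) + lam * (Real.log ((α₁ + α₂) / lam) - Glog α₂ / Real.Gamma α₂) + ((Real.log ((α₁ + α₂) / lam) + 1 - Glog α₂ / Real.Gamma α₂) + 1) * (α₂ / ((α₁ + α₂) / lam)) - (α₂ * (α₂ + 1) / ((α₁ + α₂) / lam) ^ 2) / lam - (α₂ / ((α₁ + α₂) / lam)) * (Real.log ((α₁ + α₂) / lam) - (Glog (α₂ + 1) / Real.Gamma (α₂ + 1))))) 0 (((α₁ + α₂) / lam ^ 2) * ((Real.log ((α₁ + α₂) / lam) + 1 - Glog α₂ / Real.Gamma α₂) + 1 - (Real.log ((α₁ + α₂) / lam) - Glog α₂ / Real.Gamma α₂) - 2 * (α₂ / ((α₁ + α₂) / lam)) / lam)) (((α₁ + α₂) / lam ^ 2) * (-(1 / lam))) 0).2]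
  unfold psiG
  rw [Glog_add_one h₂, Real.Gamma_add_one (ne_of_gt h₂)]
  have hΓ : (0:ℝ) < Real.Gamma α₂ := Real.Gamma_pos_of_pos h₂
  have hs : (0:ℝ) < α₁ + α₂ := by linarith
  field_simp [ne_of_gt hlam, ne_of_gt h₁, ne_of_gt h₂, (Real.Gamma_pos_of_pos h₁).ne', (Real.Gamma_pos_of_pos h₂).ne', (Real.Gamma_pos_of_pos (show (0:ℝ) < α₁ + 1 by linarith)).ne', (Real.Gamma_pos_of_pos (show (0:ℝ) < α₂ + 1 by linarith)).ne', (show (0:ℝ) < α₁ + α₂ by linarith).ne']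
  ring

/-- For two independent inverse-Gamma samples sharing the scale `β`, the
reparameterization `λ = (α₁ + α₂)/β` makes the shape parameters `α₁` and `α₂`
globally orthogonal to `λ`. -/
theorem stmt13 (α₁ α₂ lam : ℝ) (h₁ : 0 < α₁) (h₂ : 0 < α₂) (hlam : 0 < lam) :
    (∫ x₁ in Set.Ioi (0 : ℝ), ∫ x₂ in Set.Ioi (0 : ℝ),
        deriv (fun a => invGammaLbar a α₂ lam x₁ x₂) α₁ *
          deriv (fun L => invGammaLbar α₁ α₂ L x₁ x₂) lam *
          Real.exp (invGammaLbar α₁ α₂ lam x₁ x₂) = 0) ∧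
    (∫ x₁ in Set.Ioi (0 : ℝ), ∫ x₂ in Set.Ioi (0 : ℝ),
        deriv (fun a => invGammaLbar α₁ a lam x₁ x₂) α₂ *
          deriv (fun L => invGammaLbar α₁ α₂ L x₁ x₂) lam *
          Real.exp (invGammaLbar α₁ α₂ lam x₁ x₂) = 0) := by
  exact ⟨case1 h₁ h₂ hlam, case2 h₁ h₂ hlam⟩
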